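/- Let M be the set of k-subsets I of {1,…,n} with Δ_I(A) > 0 for some fixed k×n matrix A of rank k with all maximal minors nonnegative. For each r ∈ {1,…,n}, let I_r be the lexicographically minimal element of M with respect to the cyclically shifted order r < r+1 < ⋯ < n < 1 < ⋯ < r−1. Then the sequence (I_1,…,I_n) satisfies I_{r+1} ⊆ (I_r \ {r}) ∪ {some element} in the sense that I_{r+1} = I_r if r ∉ I_r, and otherwise I_{r+1} = (I_r \ {r}) ∪ {j} for some j. -/

import Mathlib

noncomputable def minor {k n : ℕ} (A : Matrix (Fin k) (Fin n) ℝ) (S : Finset (Fin n)) : ℝ :=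
  if h : S.card = k then (A.submatrix id (S.orderEmbOfFin h)).det else 0

def colIndep {k n : ℕ} (A : Matrix (Fin k) (Fin n) ℝ) (S : Finset (Fin n)) : Prop :=
  LinearIndependent ℝ (fun i : (S : Set (Fin n)) => A.transpose i)

lemma minor_ne_zero_iff {k n : ℕ} (A : Matrix (Fin k) (Fin n) ℝ) {S : Finset (Fin n)}
    (h : S.card = k) : minor A S ≠ 0 ↔ colIndep A S := by
  rw [minor, dif_pos h, ← isUnit_iff_ne_zero, ← Matrix.isUnit_iff_isUnit_det,
    ← Matrix.linearIndependent_cols_iff_isUnit]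
  unfold colIndep
  rw [← linearIndependent_equiv ((S.orderIsoOfFin h).toEquiv.trans (Equiv.setCongr rfl))
    (f := fun i : (S : Set (Fin n)) => A.transpose i)]
  constructor <;> intro hli <;> convert hli using 1 <;> first | rfl | (ext i j; rfl)

lemma minor_pos {k n : ℕ} {A : Matrix (Fin k) (Fin n) ℝ}
    (hnn : ∀ S : Finset (Fin n), 0 ≤ minor A S) {S : Finset (Fin n)}
    (h : S.card = k) (hi : colIndep A S) : 0 < minor A S :=
  lt_of_le_of_ne (hnn S) (Ne.symm ((minor_ne_zero_iff A h).mpr hi))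

lemma colIndep_mono {k n : ℕ} {A : Matrix (Fin k) (Fin n) ℝ} {S T : Finset (Fin n)}
    (hST : S ⊆ T) (h : colIndep A T) : colIndep A S :=
  h.comp (Set.inclusion (by exact_mod_cast hST)) (Set.inclusion_injective _)

lemma colIndep_insert {k n : ℕ} {A : Matrix (Fin k) (Fin n) ℝ} {S : Finset (Fin n)}
    {x : Fin n} (h : colIndep A S) (hx : x ∉ S)
    (hsp : A.transpose x ∉ Submodule.span ℝ (A.transpose '' (S : Set (Fin n)))) :
    colIndep A (insert x S) := by
  unfold colIndep
  rw [Finset.coe_insert]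
  exact (linearIndepOn_insert (f := A.transpose) (by exact_mod_cast hx)).mpr ⟨h, hsp⟩

lemma not_mem_span_erase {k n : ℕ} {A : Matrix (Fin k) (Fin n) ℝ} {S : Finset (Fin n)}
    {x : Fin n} (h : colIndep A S) (hx : x ∈ S) :
    A.transpose x ∉ Submodule.span ℝ (A.transpose '' ((S.erase x) : Set (Fin n))) := by
  have hins : (insert x (S.erase x) : Finset (Fin n)) = S := Finset.insert_erase hx
  have h' : colIndep A (insert x (S.erase x)) := by rw [hins]; exact h
  unfold colIndep at h'
  rw [Finset.coe_insert] at h'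
  exact ((linearIndepOn_insert (f := A.transpose)
    (by simp)).mp h').2

lemma col_exists_swap {k n : ℕ} {A : Matrix (Fin k) (Fin n) ℝ} {K : Finset (Fin n)}
    (hKc : K.card = k) (hKi : colIndep A K) {w : Fin k → ℝ} {W : Finset (Fin n)}
    (hWK : W ⊆ K) (hw : w ∉ Submodule.span ℝ (A.transpose '' (W : Set (Fin n)))) :
    ∃ y ∈ K, y ∉ W ∧ w ∉ Submodule.span ℝ (A.transpose '' ((K.erase y) : Set (Fin n))) := by
  classical
  rcases K.eq_empty_or_nonempty with rfl | hne
  · exfalso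
    have hk0 : k = 0 := by simpa using hKc.symm
    apply hw
    have : w = 0 := by
      funext i; exact absurd i.isLt (by omega)
    simp [this]
  · have : Nonempty ((K : Set (Fin n))) := ⟨⟨hne.choose, by exact_mod_cast hne.choose_spec⟩⟩
    have hcard : Fintype.card ((K : Set (Fin n))) = Module.finrank ℝ (Fin k → ℝ) := by
      rw [Module.finrank_fin_fun]
      simpa using hKc
    let b := basisOfLinearIndependentOfCardEqFinrank hKi hcard
    have hb : ⇑b = fun i : (K : Set (Fin n)) => A.transpose i :=
      coe_basisOfLinearIndependentOfCardEqFinrank hKi hcard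
    -- find an index outside W with nonzero coefficient
    have hex : ∃ i : (K : Set (Fin n)), (i : Fin n) ∉ W ∧ b.repr w i ≠ 0 := by
      by_contra hcon
      push_neg at hcon
      apply hw
      have hsupp : ↑(b.repr w).support ⊆ {i : (K : Set (Fin n)) | (i : Fin n) ∈ W} := by
        intro i hi
        simp only [Finset.mem_coe, Finsupp.mem_support_iff] at hi
        by_contra hiW
        exact hi (hcon i hiW)
      have := b.mem_span_image.mpr hsupp
      refine Submodule.span_mono ?_ this
      rintro _ ⟨i, hi, rfl⟩
      rw [hb]
      exact Set.mem_image_of_mem _ (by exact_mod_cast hi)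
    obtain ⟨i, hiW, hirepr⟩ := hex
    refine ⟨i, by exact_mod_cast i.2, hiW, ?_⟩
    intro hmem
    -- rewrite the span as a span of basis vectors
    have himg : A.transpose '' ((K.erase (i : Fin n)) : Set (Fin n))
        = ⇑b '' {j : (K : Set (Fin n)) | (j : Fin n) ∈ K.erase (i : Fin n)} := by
      rw [hb]
      ext z
      constructor
      · rintro ⟨y, hy, rfl⟩
        have hyK : y ∈ K := Finset.mem_of_mem_erase (by exact_mod_cast hy)
        exact ⟨⟨y, by exact_mod_cast hyK⟩, by exact_mod_cast hy, rfl⟩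
      · rintro ⟨j, hj, rfl⟩
        exact ⟨j, by exact_mod_cast hj, rfl⟩
    rw [himg] at hmem
    have := b.mem_span_image.mp hmem
    have hi2 : i ∈ (b.repr w).support := Finsupp.mem_support_iff.mpr hirepr
    have := this (Finset.mem_coe.mpr hi2)
    simp only [Set.mem_setOf_eq, Finset.mem_erase] at this
    exact this.1 rfl

lemma fin_sub_one_lt_iff {n : ℕ} [NeZero n] {x y : Fin n} (hx : x ≠ 0) (hy : y ≠ 0) :
    x - 1 < y - 1 ↔ x < y := by
  obtain ⟨m, rfl⟩ := Nat.exists_eq_succ_of_ne_zero (NeZero.ne n)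
  have hx' : (x : ℕ) ≠ 0 := fun h => hx (Fin.ext (by simpa using h))
  have hy' : (y : ℕ) ≠ 0 := fun h => hy (Fin.ext (by simpa using h))
  rw [Fin.lt_def, Fin.lt_def, Fin.coe_sub_one, Fin.coe_sub_one, if_neg hx, if_neg hy]
  omega

lemma fin_shift {n : ℕ} [NeZero n] {a b r : Fin n} (ha : a ≠ r) (hb : b ≠ r) :
    a - (r + 1) < b - (r + 1) ↔ a - r < b - r := by
  rw [sub_add_eq_sub_sub, sub_add_eq_sub_sub]
  exact fin_sub_one_lt_iff (sub_ne_zero.mpr ha) (sub_ne_zero.mpr hb)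

lemma fin_r_max {n : ℕ} [NeZero n] (r c : Fin n) : ¬ (r - (r + 1) < c) := by
  obtain ⟨m, rfl⟩ := Nat.exists_eq_succ_of_ne_zero (NeZero.ne n)
  have : r - (r + 1) = -1 := by rw [sub_add_eq_sub_sub, sub_self, zero_sub]
  rw [this, Fin.lt_def, Fin.coe_neg_one]
  have := c.isLt
  omega
theorem lex_minima_form_necklace (n k : ℕ) [NeZero n] (hk : k ≤ n)
    (A : Matrix (Fin k) (Fin n) ℝ) (hrank : A.rank = k)
    (hnn : ∀ S : Finset (Fin n), 0 ≤ minor A S)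
    (I : Fin n → Finset (Fin n))
    (hImem : ∀ r, (I r).card = k ∧ 0 < minor A (I r))
    (hImin : ∀ r : Fin n, ∀ T : Finset (Fin n), T.card = k → 0 < minor A T →
      ∀ b ∈ T \ I r, ∃ a ∈ I r \ T, a - r < b - r) :
    ∀ r : Fin n,
      (r ∉ I r → I (r + 1) = I r) ∧
      (r ∈ I r → ∃ j : Fin n, I (r + 1) = insert j ((I r).erase r)) := by
  classical
  intro r
  obtain ⟨hJc, hJpos⟩ := hImem r
  obtain ⟨hKc, hKpos⟩ := hImem (r + 1)
  have hJi : colIndep A (I r) := (minor_ne_zero_iff A hJc).mp (ne_of_gt hJpos)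
  have hKi : colIndep A (I (r + 1)) := (minor_ne_zero_iff A hKc).mp (ne_of_gt hKpos)
  have hsub : ∀ z ∈ I r, z ≠ r → z ∈ I (r + 1) := by
    intro x hxJ hxr
    by_contra hxK
    set W := (I (r + 1)).filter (fun z => z - (r + 1) < x - (r + 1)) with hW
    by_cases hdep : A.transpose x ∈ Submodule.span ℝ (A.transpose '' (W : Set (Fin n)))
    · -- `x` depends on the columns of `I (r+1)` that precede it: swap one of them into `I r`
      have hxnot := not_mem_span_erase hJi hxJ
      have hex : ∃ y ∈ W, A.transpose y ∉
          Submodule.span ℝ (A.transpose '' (((I r).erase x) : Set (Fin n))) := by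
        by_contra hcon
        push_neg at hcon
        apply hxnot
        refine Submodule.span_le.mpr ?_ hdep
        rintro _ ⟨y, hy, rfl⟩
        exact hcon y (by exact_mod_cast hy)
      obtain ⟨y, hyW, hynot⟩ := hex
      have hyK : y ∈ I (r + 1) := (Finset.mem_filter.mp hyW).1
      have hylt : y - (r + 1) < x - (r + 1) := (Finset.mem_filter.mp hyW).2
      have hyE : y ∉ (I r).erase x := fun h =>
        hynot (Submodule.subset_span (Set.mem_image_of_mem _ (by exact_mod_cast h)))
      have hyx : y ≠ x := fun h => hxK (h ▸ hyK)
      have hyJ : y ∉ I r := fun h => hyE (Finset.mem_erase.mpr ⟨hyx, h⟩)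
      have hyr : y ≠ r := by intro h; rw [h] at hylt; exact fin_r_max r _ hylt
      set T := insert y ((I r).erase x) with hT
      have hTi : colIndep A T :=
        colIndep_insert (colIndep_mono (Finset.erase_subset _ _) hJi) hyE hynot
      have hTc : T.card = k := by
        have hk0 : 0 < k := hJc ▸ Finset.card_pos.mpr ⟨x, hxJ⟩
        rw [hT, Finset.card_insert_of_notMem hyE, Finset.card_erase_of_mem hxJ, hJc]
        omega
      obtain ⟨a, haT, halt⟩ := hImin r T hTc (minor_pos hnn hTc hTi) y
        (Finset.mem_sdiff.mpr ⟨Finset.mem_insert_self _ _, hyJ⟩)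
      obtain ⟨haJ, haT'⟩ := Finset.mem_sdiff.mp haT
      have hax : a = x := by
        by_contra hax
        exact haT' (Finset.mem_insert.mpr (Or.inr (Finset.mem_erase.mpr ⟨hax, haJ⟩)))
      rw [hax] at halt
      exact absurd halt (not_lt.mpr ((fin_shift hyr hxr).mp hylt).le)
    · -- `x` is independent from the preceding columns: swap it into `I (r+1)`
      obtain ⟨y, hyK, hyW, hynot⟩ :=
        col_exists_swap hKc hKi (Finset.filter_subset _ _) hdep
      have hxKe : x ∉ (I (r + 1)).erase y := fun h => hxK (Finset.mem_of_mem_erase h)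
      set T := insert x ((I (r + 1)).erase y) with hT
      have hTi : colIndep A T :=
        colIndep_insert (colIndep_mono (Finset.erase_subset _ _) hKi) hxKe hynot
      have hTc : T.card = k := by
        have hk0 : 0 < k := hKc ▸ Finset.card_pos.mpr ⟨y, hyK⟩
        rw [hT, Finset.card_insert_of_notMem hxKe, Finset.card_erase_of_mem hyK, hKc]
        omega
      obtain ⟨a, haT, halt⟩ := hImin (r + 1) T hTc (minor_pos hnn hTc hTi) x
        (Finset.mem_sdiff.mpr ⟨Finset.mem_insert_self _ _, hxK⟩)
      obtain ⟨haK, haT'⟩ := Finset.mem_sdiff.mp haT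
      have hay : a = y := by
        by_contra hay
        exact haT' (Finset.mem_insert.mpr (Or.inr (Finset.mem_erase.mpr ⟨hay, haK⟩)))
      rw [hay] at halt
      exact hyW (Finset.mem_filter.mpr ⟨hyK, halt⟩)
  constructor
  · intro hrJ
    have hJK : I r ⊆ I (r + 1) := fun z hz => hsub z hz (fun h => hrJ (h ▸ hz))
    exact (Finset.eq_of_subset_of_card_le hJK (by rw [hJc, hKc])).symm
  · intro hrJ
    have hk0 : 0 < k := hJc ▸ Finset.card_pos.mpr ⟨r, hrJ⟩
    have hsub' : (I r).erase r ⊆ I (r + 1) := fun z hz =>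
      hsub z (Finset.mem_of_mem_erase hz) (Finset.ne_of_mem_erase hz)
    have hss : (I r).erase r ⊂ I (r + 1) := by
      refine hsub'.ssubset_of_ne (fun h => ?_)
      have := Finset.card_erase_of_mem hrJ
      rw [h, hKc, hJc] at this
      omega
    obtain ⟨j, hjK, hjE⟩ := Finset.exists_of_ssubset hss
    refine ⟨j, (Finset.eq_of_subset_of_card_le (Finset.insert_subset hjK hsub') ?_).symm⟩
    rw [Finset.card_insert_of_notMem hjE, Finset.card_erase_of_mem hrJ, hJc, hKc]
    omega
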